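/- For an integer n ≥ 2 define the polynomial M_n(z) = (4/(iπ)) Σ_{k odd, 1 ≤ k ≤ n−1} (1 − k/n) z^k / k. Then: (i) |Re M_n(e^{iθ})| ≤ 1 for every θ ∈ [0,2π); and (ii) there is an absolute constant C > 0 such that |Im M_n(1)| ≥ (2/π) log n − C for all n ≥ 2. -/

import Mathlib

open MeasureTheory Polynomial Real Set

noncomputable section

/-- The polynomial `M_n(z) = (4/(iπ)) Σ_{k odd, 1 ≤ k ≤ n−1} (1 − k/n) z^k / k`,
which is the Fejér mean of the Herglotz transform of the step function
`l = 1` on `(0,π)`, `−1` on `(π,2π)`. -/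
def fejerCauchyPoly (n : ℕ) : Polynomial ℂ :=
  Polynomial.C (4 / (Complex.I * (π : ℂ))) *
    ∑ k ∈ Finset.range n,
      if Odd k then Polynomial.C ((1 - (k : ℂ) / (n : ℂ)) / (k : ℂ)) * Polynomial.X ^ k
      else 0

namespace FejerCauchyAux

open Finset

/-- The Fejér kernel (times `n`) is a sum of two squares. -/
lemma kernel_sq (t : ℝ) (m : ℕ) :
    2 * ∑ k ∈ Finset.range m, ((m : ℝ) - k) * Real.cos (k * t) - m
      = (∑ k ∈ Finset.range m, Real.cos (k * t)) ^ 2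
        + (∑ k ∈ Finset.range m, Real.sin (k * t)) ^ 2 := by
  induction m with
  | zero => simp
  | succ m ih =>
    have key : (∑ k ∈ range m, Real.cos (k * t)) * Real.cos (m * t)
        + (∑ k ∈ range m, Real.sin (k * t)) * Real.sin (m * t)
        = ∑ k ∈ range m, Real.cos (k * t) + Real.cos (m * t) - 1 := by
      rw [Finset.sum_mul, Finset.sum_mul, ← Finset.sum_add_distrib]
      have h1 : ∀ k ∈ range m,
          Real.cos (k * t) * Real.cos (m * t) + Real.sin (k * t) * Real.sin (m * t)
          = Real.cos (((m - k : ℕ) : ℝ) * t) := by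
        intro k hk
        rw [← Real.cos_sub, ← Real.cos_neg ((k : ℝ) * t - m * t)]
        congr 1
        have hkm : k ≤ m := (mem_range.mp hk).le
        push_cast [Nat.cast_sub hkm]
        ring
      rw [Finset.sum_congr rfl h1]
      have h2 : ∑ k ∈ range m, Real.cos (((m - k : ℕ) : ℝ) * t)
          = ∑ k ∈ range m, Real.cos (((k + 1 : ℕ) : ℝ) * t) := by
        rw [← Finset.sum_range_reflect (fun j => Real.cos (((j + 1 : ℕ) : ℝ) * t)) m]
        apply Finset.sum_congr rfl
        intro k hk
        have hk' : k < m := mem_range.mp hk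
        have : m - 1 - k + 1 = m - k := by omega
        rw [this]
      rw [h2]
      have h3 := Finset.sum_range_succ' (fun k => Real.cos ((k : ℝ) * t)) m
      simp only [Nat.cast_zero, zero_mul, Real.cos_zero] at h3
      have h4 : ∑ k ∈ range m, Real.cos (((k + 1 : ℕ) : ℝ) * t)
          = ∑ k ∈ range (m + 1), Real.cos ((k : ℝ) * t) - 1 := by
        rw [h3]; push_cast; ring
      rw [h4, Finset.sum_range_succ]
    have split : ∑ k ∈ range (m + 1), (((m + 1 : ℕ) : ℝ) - k) * Real.cos (k * t)
        = (∑ k ∈ range m, ((m : ℝ) - k) * Real.cos (k * t))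
          + (∑ k ∈ range m, Real.cos (k * t)) + Real.cos (m * t) := by
      rw [Finset.sum_range_succ, ← Finset.sum_add_distrib]
      push_cast
      have : ∀ x ∈ range m, ((m : ℝ) + 1 - x) * Real.cos (x * t)
          = ((m : ℝ) - x) * Real.cos (x * t) + Real.cos (x * t) := by
        intro x _; ring
      rw [Finset.sum_congr rfl this]
      ring
    rw [split, Finset.sum_range_succ, Finset.sum_range_succ]
    push_cast
    linear_combination ih - 2 * key - Real.sin_sq_add_cos_sq ((m : ℝ) * t)

/-- Antiderivative of the (shifted) Fejér kernel. -/
def phiF (n : ℕ) (θ : ℝ) : ℝ :=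
  n * θ + 2 * ∑ k ∈ Finset.range n,
    (if k = 0 then 0 else ((n : ℝ) - k) / k) * Real.sin (k * θ)

lemma hasDerivAt_phiF (n : ℕ) (hn : 0 < n) (θ : ℝ) :
    HasDerivAt (phiF n)
      (2 * ∑ k ∈ Finset.range n, ((n : ℝ) - k) * Real.cos (k * θ) - n) θ := by
  have hterm : ∀ k ∈ range n, HasDerivAt
      (fun x : ℝ => (if k = 0 then 0 else ((n : ℝ) - k) / k) * Real.sin (k * x))
      ((if k = 0 then 0 else ((n : ℝ) - k) / k) * (Real.cos (k * θ) * k)) θ := by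
    intro k _
    have h1 : HasDerivAt (fun x : ℝ => (k : ℝ) * x) k θ := by
      simpa using (hasDerivAt_id θ).const_mul (k : ℝ)
    exact ((Real.hasDerivAt_sin ((k : ℝ) * θ)).comp θ h1).const_mul _
  have hsum := (HasDerivAt.sum hterm).const_mul (2 : ℝ)
  have hlin : HasDerivAt (fun x : ℝ => (n : ℝ) * x) n θ := by
    simpa using (hasDerivAt_id θ).const_mul (n : ℝ)
  have hadd := hlin.add hsum
  have hval : (n : ℝ) + 2 * ∑ k ∈ range n,
      (if k = 0 then 0 else ((n : ℝ) - k) / k) * (Real.cos (k * θ) * k)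
      = 2 * ∑ k ∈ range n, ((n : ℝ) - k) * Real.cos (k * θ) - n := by
    have h2 : ∀ k ∈ range n,
        (if k = 0 then 0 else ((n : ℝ) - k) / k) * (Real.cos (k * θ) * k)
        = ((n : ℝ) - k) * Real.cos (k * θ) - (if k = 0 then (n : ℝ) else 0) := by
      intro k _
      rcases eq_or_ne k 0 with rfl | hk
      · simp
      · have hk' : (k : ℝ) ≠ 0 := Nat.cast_ne_zero.mpr hk
        rw [if_neg hk, if_neg hk]
        field_simp
        ring
    rw [Finset.sum_congr rfl h2, Finset.sum_sub_distrib, Finset.sum_ite_eq' (range n) 0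
      (fun _ => (n : ℝ))]
    rw [if_pos (Finset.mem_range.mpr hn)]
    ring
  rw [← hval]
  refine hadd.congr_of_eventuallyEq (Filter.Eventually.of_forall fun x => ?_)
  simp [phiF, Finset.sum_apply]

lemma mono_phiF (n : ℕ) (hn : 0 < n) : Monotone (phiF n) := by
  apply monotone_of_deriv_nonneg
  · exact fun x => (hasDerivAt_phiF n hn x).differentiableAt
  · intro x
    rw [(hasDerivAt_phiF n hn x).deriv, kernel_sq]
    positivity

lemma sin_mul_shift (k : ℕ) (θ : ℝ) (s : ℝ) (hs : s = 1 ∨ s = -1) :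
    Real.sin ((k : ℝ) * (θ + s * π)) = (-1) ^ k * Real.sin (k * θ) := by
  have hcos : Real.cos ((k : ℝ) * π) = (-1) ^ k := by
    simpa using Real.cos_nat_mul_pi_sub 0 k
  rcases hs with rfl | rfl
  · rw [show (k : ℝ) * (θ + 1 * π) = (k : ℝ) * θ + (k : ℝ) * π by ring,
      Real.sin_add, Real.sin_nat_mul_pi, hcos]; ring
  · rw [show (k : ℝ) * (θ + (-1) * π) = (k : ℝ) * θ - (k : ℝ) * π by ring,
      Real.sin_sub, Real.sin_nat_mul_pi, hcos]; ring

lemma phiF_diff1 (n : ℕ) (θ : ℝ) :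
    phiF n θ - phiF n (θ - π)
      = n * π + 4 * ∑ k ∈ Finset.range n,
          (if Odd k then ((n : ℝ) - k) / k * Real.sin (k * θ) else 0) := by
  unfold phiF
  have key : ∑ k ∈ range n, (if k = 0 then 0 else ((n : ℝ) - k) / k) * Real.sin (k * θ)
      - ∑ k ∈ range n, (if k = 0 then 0 else ((n : ℝ) - k) / k) * Real.sin (k * (θ - π))
      = ∑ k ∈ range n, (if Odd k then 2 * (((n : ℝ) - k) / k * Real.sin (k * θ)) else 0) := by
    rw [← Finset.sum_sub_distrib]
    apply Finset.sum_congr rfl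
    intro k _
    have hsin : Real.sin ((k : ℝ) * (θ - π)) = (-1) ^ k * Real.sin (k * θ) := by
      rw [show θ - π = θ + (-1) * π by ring, sin_mul_shift k θ (-1) (Or.inr rfl)]
    rw [hsin]
    rcases Nat.even_or_odd k with he | ho
    · rw [he.neg_one_pow, if_neg (Nat.not_odd_iff_even.mpr he)]
      ring
    · rw [ho.neg_one_pow, if_pos ho,
        if_neg (by rintro rfl; simp at ho)]
      ring
  have h2 : ∑ k ∈ range n, (if Odd k then 2 * (((n : ℝ) - k) / k * Real.sin (k * θ)) else 0)
      = 2 * ∑ k ∈ range n, (if Odd k then ((n : ℝ) - k) / k * Real.sin (k * θ) else 0) := by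
    rw [Finset.mul_sum]
    apply Finset.sum_congr rfl
    intro k _; split <;> ring
  linear_combination 2 * key + 2 * h2

lemma phiF_diff2 (n : ℕ) (θ : ℝ) :
    phiF n (θ + π) - phiF n (θ - π) = 2 * n * π := by
  unfold phiF
  have key : ∑ k ∈ range n, (if k = 0 then 0 else ((n : ℝ) - k) / k) * Real.sin (k * (θ + π))
      - ∑ k ∈ range n, (if k = 0 then 0 else ((n : ℝ) - k) / k) * Real.sin (k * (θ - π))
      = 0 := by
    rw [← Finset.sum_sub_distrib]
    apply Finset.sum_eq_zero
    intro k _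
    rw [show θ + π = θ + (1 : ℝ) * π by ring, sin_mul_shift k θ 1 (Or.inl rfl),
      show θ - π = θ + (-1) * π by ring, sin_mul_shift k θ (-1) (Or.inr rfl)]
    ring
  linear_combination 2 * key

lemma coeff_eq : (4 / (Complex.I * (π : ℂ))) = ((4 / π : ℝ) : ℂ) * (-Complex.I) := by
  have hπ : (π : ℂ) ≠ 0 := Complex.ofReal_ne_zero.mpr Real.pi_ne_zero
  rw [div_eq_iff (mul_ne_zero Complex.I_ne_zero hπ)]
  push_cast
  rw [div_mul_eq_mul_div, div_mul_eq_mul_div, eq_comm, div_eq_iff hπ]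
  linear_combination (-4 : ℂ) * (π : ℂ) * Complex.I_sq

lemma re_neg_I_mul (r : ℝ) (W : ℂ) : (((r : ℂ) * -Complex.I) * W).re = r * W.im := by
  simp [Complex.mul_re, Complex.mul_im]

lemma eval_exp (n : ℕ) (θ : ℝ) :
    ((fejerCauchyPoly n).eval (Complex.exp (θ * Complex.I))).re
      = (4 / π) * ∑ k ∈ Finset.range n,
          (if Odd k then (1 - (k : ℝ) / n) / k * Real.sin (k * θ) else 0) := by
  have hW : ∀ k ∈ range n,
      ((if Odd k then Polynomial.C ((1 - (k : ℂ) / (n : ℂ)) / (k : ℂ)) * Polynomial.X ^ k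
        else 0).eval (Complex.exp (θ * Complex.I)))
      = if Odd k then (((1 - (k : ℝ) / n) / k : ℝ) : ℂ) * Complex.exp (((k * θ : ℝ) : ℂ) * Complex.I)
        else 0 := by
    intro k _
    split
    · rw [Polynomial.eval_mul, Polynomial.eval_C, Polynomial.eval_pow, Polynomial.eval_X,
        ← Complex.exp_nat_mul]
      congr 1
      · push_cast; ring
      · push_cast; ring
    · simp
  rw [fejerCauchyPoly, Polynomial.eval_mul, Polynomial.eval_C, Polynomial.eval_finset_sum,
    Finset.sum_congr rfl hW, coeff_eq, re_neg_I_mul]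
  congr 1
  rw [Complex.im_sum]
  apply Finset.sum_congr rfl
  intro k _
  split
  · simp only [Complex.mul_im, Complex.ofReal_re, Complex.ofReal_im,
      Complex.exp_ofReal_mul_I_im, Complex.exp_ofReal_mul_I_re]
    ring
  · simp

lemma eval_one (n : ℕ) :
    ((fejerCauchyPoly n).eval 1).im
      = -((4 / π) * ∑ k ∈ Finset.range n,
          (if Odd k then (1 - (k : ℝ) / n) / k else 0)) := by
  have hW : ∀ k ∈ range n,
      ((if Odd k then Polynomial.C ((1 - (k : ℂ) / (n : ℂ)) / (k : ℂ)) * Polynomial.X ^ k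
        else 0).eval 1)
      = if Odd k then (((1 - (k : ℝ) / n) / k : ℝ) : ℂ) else 0 := by
    intro k _
    split
    · rw [Polynomial.eval_mul, Polynomial.eval_C, Polynomial.eval_pow, Polynomial.eval_X,
        one_pow, mul_one]
      push_cast; ring
    · simp
  rw [fejerCauchyPoly, Polynomial.eval_mul, Polynomial.eval_C, Polynomial.eval_finset_sum,
    Finset.sum_congr rfl hW, coeff_eq]
  have h : ∀ r : ℝ, ∀ W : ℂ, (((r : ℂ) * -Complex.I) * W).im = -(r * W.re) := by
    intro r W; simp [Complex.mul_re, Complex.mul_im]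
  rw [h]
  congr 1
  congr 1
  rw [Complex.re_sum]
  apply Finset.sum_congr rfl
  intro k _
  split <;> simp

lemma odd_sum_reindex (f : ℕ → ℝ) (n : ℕ) :
    ∑ k ∈ Finset.range n, (if Odd k then f k else 0)
      = ∑ j ∈ Finset.range (n / 2), f (2 * j + 1) := by
  induction n with
  | zero => simp
  | succ n ih =>
    rw [Finset.sum_range_succ, ih]
    rcases Nat.even_or_odd n with he | ho
    · rw [if_neg (Nat.not_odd_iff_even.mpr he), add_zero]
      obtain ⟨m, rfl⟩ := he
      have : (m + m + 1) / 2 = (m + m) / 2 := by omega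
      rw [this]
    · rw [if_pos ho]
      obtain ⟨m, rfl⟩ := ho
      have h1 : (2 * m + 1) / 2 = m := by omega
      have h2 : (2 * m + 1 + 1) / 2 = m + 1 := by omega
      rw [h1, h2, Finset.sum_range_succ]

lemma log_le_odd_sum (m : ℕ) :
    Real.log (2 * m + 1) ≤ 2 * ∑ j ∈ Finset.range m, (1 : ℝ) / (2 * j + 1) := by
  have tel := Finset.sum_range_sub (fun j : ℕ => Real.log (2 * j + 1)) m
  have hterm : ∀ j ∈ Finset.range m,
      Real.log (2 * (j + 1 : ℕ) + 1) - Real.log (2 * j + 1)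
        ≤ 2 * ((1 : ℝ) / (2 * j + 1)) := by
    intro j _
    have hpos : (0 : ℝ) < 2 * j + 1 := by positivity
    have hpos' : (0 : ℝ) < 2 * (j + 1 : ℕ) + 1 := by positivity
    rw [← Real.log_div (ne_of_gt hpos') (ne_of_gt hpos)]
    have hle := Real.log_le_sub_one_of_pos (div_pos hpos' hpos)
    calc Real.log ((2 * (j + 1 : ℕ) + 1) / (2 * j + 1))
        ≤ (2 * (j + 1 : ℕ) + 1) / (2 * j + 1) - 1 := hle
      _ = 2 * ((1 : ℝ) / (2 * j + 1)) := by
          field_simp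
          push_cast
          ring
  calc Real.log (2 * m + 1) = ∑ j ∈ Finset.range m,
        (Real.log (2 * (j + 1 : ℕ) + 1) - Real.log (2 * j + 1)) := by
        rw [tel]; push_cast; simp
    _ ≤ ∑ j ∈ Finset.range m, 2 * ((1 : ℝ) / (2 * j + 1)) := Finset.sum_le_sum hterm
    _ = 2 * ∑ j ∈ Finset.range m, (1 : ℝ) / (2 * j + 1) := by rw [Finset.mul_sum]

end FejerCauchyAux

/-- On the unit circle, `|Re M_n| ≤ 1`, while the imaginary part at `z = 1` is at least
`(2/π) log n − C` for an absolute constant `C`. -/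
theorem fejerCauchyPoly_properties :
    (∀ n : ℕ, 2 ≤ n → ∀ θ : ℝ,
      |((fejerCauchyPoly n).eval (Complex.exp (θ * Complex.I))).re| ≤ 1) ∧
    ∃ C : ℝ, 0 < C ∧ ∀ n : ℕ, 2 ≤ n →
      (2 / π) * Real.log n - C ≤ |((fejerCauchyPoly n).eval 1).im| := by
  open FejerCauchyAux in
  constructor
  · -- Part (i)
    intro n hn θ
    have hn0 : 0 < n := by omega
    have hnR : (0 : ℝ) < n := by exact_mod_cast hn0
    set S := ∑ k ∈ Finset.range n,
        (if Odd k then ((n : ℝ) - k) / k * Real.sin (k * θ) else 0) with hS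
    have hmono := mono_phiF n hn0
    have hlow : 0 ≤ (n : ℝ) * π + 4 * S := by
      rw [← phiF_diff1 n θ]
      have := hmono (show θ - π ≤ θ by linarith [Real.pi_pos])
      linarith
    have hhigh : (n : ℝ) * π + 4 * S ≤ 2 * n * π := by
      rw [← phiF_diff1 n θ, ← phiF_diff2 n θ]
      have := hmono (show θ ≤ θ + π by linarith [Real.pi_pos])
      linarith
    have habsS : |S| ≤ n * π / 4 := by
      rw [abs_le]; constructor <;> linarith
    rw [eval_exp n θ]
    have hTS : ∑ k ∈ Finset.range n,
        (if Odd k then (1 - (k : ℝ) / n) / k * Real.sin (k * θ) else 0) = S / n := by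
      rw [hS, Finset.sum_div]
      apply Finset.sum_congr rfl
      intro k _
      by_cases hko : Odd k
      · rw [if_pos hko, if_pos hko, eq_div_iff (ne_of_gt hnR)]
        have hk0 : (k : ℝ) ≠ 0 := Nat.cast_ne_zero.mpr (by rintro rfl; simp at hko)
        field_simp
      · rw [if_neg hko, if_neg hko]
        simp
    rw [hTS, abs_mul, abs_of_pos (by positivity : (0 : ℝ) < 4 / π), abs_div,
      abs_of_pos hnR]
    calc 4 / π * (|S| / n) ≤ 4 / π * ((n * π / 4) / n) := by
          gcongr
      _ = 1 := by
          field_simp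
  · -- Part (ii)
    refine ⟨4 / π, by positivity, ?_⟩
    intro n hn
    have hn0 : 0 < n := by omega
    have hnR : (0 : ℝ) < n := by exact_mod_cast hn0
    rw [eval_one n, abs_neg]
    set m := n / 2 with hm
    have hsum : ∑ k ∈ Finset.range n, (if Odd k then (1 - (k : ℝ) / n) / k else 0)
        = ∑ j ∈ Finset.range m, (1 - ((2 * j + 1 : ℕ) : ℝ) / n) / ((2 * j + 1 : ℕ) : ℝ) :=
      odd_sum_reindex (fun k => (1 - (k : ℝ) / n) / (k : ℝ)) n
    have hterm : ∀ j ∈ Finset.range m,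
        (1 - ((2 * j + 1 : ℕ) : ℝ) / n) / ((2 * j + 1 : ℕ) : ℝ)
          = (1 : ℝ) / (2 * j + 1) - 1 / n := by
      intro j _
      have h1 : (2 * (j : ℝ) + 1) ≠ 0 := by positivity
      push_cast
      rw [div_eq_iff h1, sub_mul, div_mul_cancel₀ _ h1]
      ring
    have hm1 : (n : ℝ) ≤ 2 * m + 1 := by
      have : n ≤ 2 * m + 1 := by omega
      exact_mod_cast this
    have hmn : (m : ℝ) ≤ n := by exact_mod_cast Nat.div_le_self n 2
    have hlog : Real.log n ≤ 2 * ∑ j ∈ Finset.range m, (1 : ℝ) / (2 * j + 1) := by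
      calc Real.log n ≤ Real.log (2 * m + 1) := Real.log_le_log hnR hm1
        _ ≤ 2 * ∑ j ∈ Finset.range m, (1 : ℝ) / (2 * j + 1) := log_le_odd_sum m
    have hsum2 : ∑ k ∈ Finset.range n, (if Odd k then (1 - (k : ℝ) / n) / k else 0)
        = (∑ j ∈ Finset.range m, (1 : ℝ) / (2 * j + 1)) - m / n := by
      rw [hsum, Finset.sum_congr rfl hterm, Finset.sum_sub_distrib]
      congr 1
      rw [Finset.sum_const, Finset.card_range]
      push_cast
      ring
    have hmn1 : (m : ℝ) / n ≤ 1 := by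
      rw [div_le_one hnR]; exact hmn
    have hge : (1 / 2 : ℝ) * Real.log n - 1
        ≤ ∑ k ∈ Finset.range n, (if Odd k then (1 - (k : ℝ) / n) / k else 0) := by
      rw [hsum2]; linarith
    have hnonneg : 0 ≤ ∑ k ∈ Finset.range n, (if Odd k then (1 - (k : ℝ) / n) / k else 0) := by
      apply Finset.sum_nonneg
      intro k hk
      split
      · have hkn : (k : ℝ) ≤ n := by
          exact_mod_cast (Finset.mem_range.mp hk).le
        have h1 : (k : ℝ) / n ≤ 1 := by rw [div_le_one hnR]; exact hkn
        apply div_nonneg (by linarith) (by positivity)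
      · exact le_refl 0
    rw [abs_of_nonneg (mul_nonneg (by positivity : (0 : ℝ) ≤ 4 / π) hnonneg)]
    calc (2 / π) * Real.log n - 4 / π
        = (4 / π) * ((1 / 2 : ℝ) * Real.log n - 1) := by ring
      _ ≤ (4 / π) * ∑ k ∈ Finset.range n, (if Odd k then (1 - (k : ℝ) / n) / k else 0) :=
          mul_le_mul_of_nonneg_left hge (by positivity)
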